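/- arXiv:1102.2689 — 3 statements merged into one kernel-verified Lean document; each statement's English description precedes it below -/
import Mathlib

section
/- Let w ∈ S_n, suppose (i,j) ∈ ninv(w) with j ≤ n, and let 1 ≤ x ≤ c_i(w) and 1 ≤ y ≤ c_j(w). Then b_{j,y}(w) ≤ b_{i,x}(w) in the product order if and only if y ≤ x − m_{i,j}(w). -/
/-- The inversion set of `w`: pairs of positions `(i,j)` with `i < j` and `w i > w j`. -/
def Invs {n : ℕ} (w : Equiv.Perm (Fin n)) : Finset (Fin n × Fin n) :=
  Finset.univ.filter (fun p => p.1 < p.2 ∧ w p.2 < w p.1)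

/-- The length (number of inversions) of `w`. -/
def len {n : ℕ} (w : Equiv.Perm (Fin n)) : ℕ := (Invs w).card

/-- The `i`-th entry of the Lehmer code of `w`. -/
def lehmer {n : ℕ} (w : Equiv.Perm (Fin n)) (i : Fin n) : ℕ :=
  ((Invs w).filter (fun p => p.1 = i)).card

/-- The extended Lehmer code `m_{i,j}(w)`: the number of inversions `(i,k)` with `k < j`. -/
def mext {n : ℕ} (w : Equiv.Perm (Fin n)) (i : Fin n) (j : Fin (n + 1)) : ℕ :=
  ((Invs w).filter (fun p => p.1 = i ∧ (p.2 : ℕ) < (j : ℕ))).card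

/-- The left weak order: `v ≤_L w` iff `inv(v) ⊆ inv(w)`. -/
def leftWeak {n : ℕ} (v w : Equiv.Perm (Fin n)) : Prop := Invs v ⊆ Invs w

/-- The value of `w` extended to `Fin (n+1)` by fixing the last point
(the `1`-indexed convention `w(n+1) = n+1` becomes `wval w n = n` here). -/
def wval {n : ℕ} (w : Equiv.Perm (Fin n)) (j : Fin (n + 1)) : ℕ :=
  if h : (j : ℕ) < n then (w ⟨j, h⟩ : ℕ) else n

/-- The set of non-inversions of `w`: pairs `(i,j)` with `i ≤ j ≤ n+1` and `w i ≤ w j`,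
where `w` is extended by fixing the last point. -/
def Ninvs {n : ℕ} (w : Equiv.Perm (Fin n)) : Finset (Fin n × Fin (n + 1)) :=
  Finset.univ.filter (fun p => (p.1 : ℕ) ≤ (p.2 : ℕ) ∧ (w p.1 : ℕ) ≤ wval w p.2)

/-- The set of Lehmer codes of elements of the weak order interval `Λ_w = [id, w]`. -/
def codeSet {n : ℕ} (w : Equiv.Perm (Fin n)) : Set (Fin n → ℕ) :=
  {x | ∃ v : Equiv.Perm (Fin n), leftWeak v w ∧ lehmer v = x}

/-- The tuple `b_{i,x}(w)`: the `j`-th coordinate is `0` if `j < i` or `(i,j) ∈ inv(w)`,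
and is `max {0, x - m_{i,j}(w)}` (truncated subtraction) if `j ≥ i` and `(i,j) ∈ ninv(w)`. -/
def bmin {n : ℕ} (w : Equiv.Perm (Fin n)) (i : Fin n) (x : ℕ) : Fin n → ℕ :=
  fun j => if (i : ℕ) ≤ (j : ℕ) ∧ (w i : ℕ) ≤ (w j : ℕ) then x - mext w i j.castSucc else 0

/-- The set `M_w` of all `b_{i,x}(w)` for `1 ≤ x ≤ c_i(w)`. -/
def Mset {n : ℕ} (w : Equiv.Perm (Fin n)) : Set (Fin n → ℕ) :=
  {z | ∃ (i : Fin n) (x : ℕ), 1 ≤ x ∧ x ≤ lehmer w i ∧ z = bmin w i x}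

/-- The direct sum `v × w ∈ S_{m+n}` of permutations. -/
def dsum {m n : ℕ} (v : Equiv.Perm (Fin m)) (w : Equiv.Perm (Fin n)) :
    Equiv.Perm (Fin (m + n)) :=
  finSumFinEquiv.permCongr (Equiv.sumCongr v w)
lemma mext_eq {n : ℕ} (w : Equiv.Perm (Fin n)) (i : Fin n) (j : Fin (n+1)) :
    mext w i j = (Finset.univ.filter
      (fun l : Fin n => i < l ∧ (l : ℕ) < (j : ℕ) ∧ w l < w i)).card := by
  unfold mext
  apply Finset.card_bij (fun p _ => p.2)
  · intro p hp
    simp only [Invs, Finset.mem_filter, Finset.mem_univ, true_and] at hp ⊢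
    obtain ⟨⟨h1, h2⟩, h3, h4⟩ := hp
    subst h3; exact ⟨h1, h4, h2⟩
  · intro p hp q hq h
    simp only [Invs, Finset.mem_filter, Finset.mem_univ, true_and] at hp hq
    exact Prod.ext (hp.2.1.trans hq.2.1.symm) h
  · intro l hl
    simp only [Finset.mem_filter, Finset.mem_univ, true_and] at hl
    refine ⟨(i, l), ?_, rfl⟩
    simp only [Invs, Finset.mem_filter, Finset.mem_univ, true_and]
    tauto

lemma mext_self {n : ℕ} (w : Equiv.Perm (Fin n)) (j : Fin n) :
    mext w j j.castSucc = 0 := by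
  rw [mext_eq, Finset.card_eq_zero, Finset.filter_eq_empty_iff]
  intro l _ hcon
  have h1 := Fin.lt_def.mp hcon.1
  have h2 : (l : ℕ) < ((j.castSucc : Fin (n+1)) : ℕ) := hcon.2.1
  simp only [Fin.coe_castSucc] at h2
  omega

lemma mext_triangle {n : ℕ} (w : Equiv.Perm (Fin n)) (i j k : Fin n)
    (hij : (w i : ℕ) ≤ (w j : ℕ)) :
    mext w i k.castSucc ≤ mext w i j.castSucc + mext w j k.castSucc := by
  rw [mext_eq, mext_eq, mext_eq]
  refine le_trans (Finset.card_le_card ?_) (Finset.card_union_le _ _)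
  intro l hl
  simp only [Finset.mem_filter, Finset.mem_univ, true_and, Finset.mem_union,
    Fin.coe_castSucc] at hl ⊢
  obtain ⟨h1, h2, h3⟩ := hl
  rcases lt_or_ge (l : ℕ) (j : ℕ) with h | h
  · exact Or.inl ⟨h1, h, h3⟩
  · have h3' : (w l : ℕ) < (w i : ℕ) := h3
    refine Or.inr ⟨Fin.lt_def.mpr ?_, h2, Fin.lt_def.mpr (by omega)⟩
    have : (l : ℕ) ≠ (j : ℕ) := by
      intro e
      have : l = j := Fin.ext e
      subst this
      omega
    omega

/-- Lemma 4.12: if `(i,j) ∈ ninv(w)` with `j ≤ n`, `1 ≤ x ≤ c_i(w)` and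
`1 ≤ y ≤ c_j(w)`, then `b_{j,y}(w) ≤ b_{i,x}(w)` iff `y ≤ x - m_{i,j}(w)`. -/
theorem bmin_le_iff {n : ℕ} (w : Equiv.Perm (Fin n)) (i j : Fin n)
    (hninv : (i, j.castSucc) ∈ Ninvs w) (x y : ℕ)
    (hx1 : 1 ≤ x) (hx2 : x ≤ lehmer w i) (hy1 : 1 ≤ y) (hy2 : y ≤ lehmer w j) :
    bmin w j y ≤ bmin w i x ↔ y ≤ x - mext w i j.castSucc := by
  have hj : ((j.castSucc : Fin (n+1)) : ℕ) < n := j.isLt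
  have hninv' : (i : ℕ) ≤ (j : ℕ) ∧ (w i : ℕ) ≤ (w j : ℕ) := by
    have hjj : (j : ℕ) < n := j.isLt
    simpa only [Ninvs, Finset.mem_filter_univ, Finset.mem_filter, Finset.mem_univ, true_and, wval,
      Fin.coe_castSucc, hjj, dite_true, Fin.eta] using (Finset.mem_filter.mp hninv).2
  constructor
  · intro h
    have := h j
    simp only [bmin, le_refl, and_self, if_pos, mext_self, Nat.sub_zero,
      if_pos hninv'] at this
    exact this
  · intro h k
    simp only [bmin]
    split_ifs with h1 h2 h2
    · calc y - mext w j k.castSucc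
          ≤ (x - mext w i j.castSucc) - mext w j k.castSucc :=
            Nat.sub_le_sub_right h _
        _ = x - (mext w i j.castSucc + mext w j k.castSucc) := by omega
        _ ≤ x - mext w i k.castSucc :=
            Nat.sub_le_sub_left (mext_triangle w i j k hninv'.2) _
    · exact absurd ⟨hninv'.1.trans h1.1, hninv'.2.trans h1.2⟩ h2
    · exact Nat.zero_le _
    · exact Nat.zero_le _
end

section
/- Let w ∈ S_n and let J(M_w) denote the set of down-closed subsets (order ideals) of the subposet M_w of ℕ^n, ordered by inclusion. Then the map sending x ∈ c(Λ_w) to {z ∈ M_w : z ≤ x in the product order} is an order isomorphism from (c(Λ_w), product order) onto (J(M_w), ⊆). -/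
open Finset Equiv

namespace CodeAux
variable {n : ℕ}

lemma mem_Invs {w : Equiv.Perm (Fin n)} {p : Fin n × Fin n} :
    p ∈ Invs w ↔ p.1 < p.2 ∧ w p.2 < w p.1 := by
  simp [Invs]

lemma card_pairs (v : Equiv.Perm (Fin n)) (i : Fin n) (P : Fin n → Prop) [DecidablePred P] :
    ((Invs v).filter (fun p => p.1 = i ∧ P p.2)).card
      = (univ.filter (fun k => i < k ∧ v k < v i ∧ P k)).card := by
  apply Finset.card_bij (fun p _ => p.2)
  · rintro ⟨a, b⟩ hp
    simp only [mem_filter, mem_Invs] at hp ⊢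
    obtain ⟨⟨h1, h2⟩, rfl, hP⟩ := hp
    exact ⟨mem_univ _, h1, h2, hP⟩
  · rintro ⟨a, b⟩ ha ⟨c, d⟩ hc h
    simp only [mem_filter] at ha hc
    simp only [Prod.mk.injEq] at *
    exact ⟨ha.2.1.trans hc.2.1.symm, h⟩
  · intro k hk
    simp only [mem_filter, mem_univ, true_and] at hk
    exact ⟨(i, k), by simp [mem_Invs, hk.1, hk.2.1, hk.2.2], rfl⟩

lemma lehmer_eq (v : Equiv.Perm (Fin n)) (i : Fin n) :
    lehmer v i = (univ.filter (fun k => i < k ∧ v k < v i)).card := by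
  have h := card_pairs v i (fun _ => True)
  simpa [lehmer] using h

lemma mext_eq (w : Equiv.Perm (Fin n)) (i : Fin n) (j : Fin (n + 1)) :
    mext w i j = (univ.filter (fun k => i < k ∧ w k < w i ∧ (k : ℕ) < (j : ℕ))).card :=
  card_pairs w i (fun k => (k : ℕ) < (j : ℕ))

lemma mext_self (w : Equiv.Perm (Fin n)) (i : Fin n) : mext w i i.castSucc = 0 := by
  rw [mext_eq, Finset.card_eq_zero, Finset.filter_eq_empty_iff]
  rintro k -
  rw [Fin.lt_def, Fin.coe_castSucc]
  omega

lemma mext_last (v : Equiv.Perm (Fin n)) (i : Fin n) : mext v i (Fin.last n) = lehmer v i := by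
  rw [mext_eq, lehmer_eq]
  congr 1
  apply filter_congr
  intro k _
  simp [k.isLt]

lemma gen_count {v w : Equiv.Perm (Fin n)} (hsub : Invs v ⊆ Invs w) {i j : Fin n}
    (hij : (i : ℕ) ≤ (j : ℕ)) (hw : (w i : ℕ) ≤ (w j : ℕ)) (l : Fin (n + 1)) :
    (univ.filter (fun k => i < k ∧ v k < v i ∧ (k : ℕ) < (l : ℕ))).card ≤
      mext w i j.castSucc + (univ.filter (fun k => j < k ∧ v k < v j ∧ (k : ℕ) < (l : ℕ))).card := by
  have hvw : ∀ k : Fin n, i < k → v k < v i → w k < w i := by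
    intro k h1 h2
    have := hsub (show (i, k) ∈ Invs v by simp [mem_Invs, h1, h2])
    rw [mem_Invs] at this
    exact this.2
  have hvij : i < j → v i < v j := by
    intro hlt
    have h1 : (i, j) ∉ Invs w := by
      rw [mem_Invs]
      dsimp only
      rintro ⟨-, h⟩
      rw [Fin.lt_def] at h
      omega
    have h2 : (i, j) ∉ Invs v := fun h => h1 (hsub h)
    rw [mem_Invs, not_and] at h2
    have h3 := h2 hlt
    rcases lt_or_ge (v i) (v j) with h | h
    · exact h
    · rcases lt_or_eq_of_le h with h | h
      · exact absurd h h3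
      · exact absurd (v.injective (Fin.ext (congrArg Fin.val h)).symm) (ne_of_lt hlt)
  set S := univ.filter (fun k => i < k ∧ v k < v i ∧ (k : ℕ) < (l : ℕ)) with hS
  have hsplit := Finset.card_filter_add_card_filter_not
    (s := S) (p := fun k => (k : ℕ) < (j : ℕ))
  have hm : mext w i j.castSucc
      = (univ.filter (fun k => i < k ∧ w k < w i ∧ (k : ℕ) < (j : ℕ))).card := by
    rw [mext_eq]
    simp only [Fin.coe_castSucc]
  have c1 : (S.filter (fun k : Fin n => (k : ℕ) < (j : ℕ))).card ≤ mext w i j.castSucc := by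
    rw [hm]
    apply card_le_card
    intro k hk
    simp only [hS, mem_filter, mem_univ, true_and] at hk ⊢
    exact ⟨hk.1.1, hvw k hk.1.1 hk.1.2.1, hk.2⟩
  have c2 : (S.filter (fun k : Fin n => ¬ (k : ℕ) < (j : ℕ))).card ≤
      (univ.filter (fun k => j < k ∧ v k < v j ∧ (k : ℕ) < (l : ℕ))).card := by
    apply card_le_card
    intro k hk
    simp only [hS, mem_filter, mem_univ, true_and, not_lt] at hk ⊢
    obtain ⟨⟨hik, hvk, hkl⟩, hjk⟩ := hk
    have hkj : (j : ℕ) < (k : ℕ) := by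
      rcases Nat.lt_or_ge (j : ℕ) (k : ℕ) with h | h
      · exact h
      · have : k = j := Fin.ext (le_antisymm h hjk)
        subst this
        exact absurd (hvij hik) (not_lt.2 (le_of_lt hvk))
    refine ⟨by rwa [Fin.lt_def], ?_, hkl⟩
    rcases Nat.lt_or_ge (i : ℕ) (j : ℕ) with h | h
    · exact lt_trans hvk (hvij (by rwa [Fin.lt_def]))
    · have : i = j := Fin.ext (le_antisymm hij h)
      subst this
      exact hvk
  omega

lemma lehmer_le_add_mext {v w : Equiv.Perm (Fin n)} (hsub : Invs v ⊆ Invs w) {i j : Fin n}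
    (hij : (i : ℕ) ≤ (j : ℕ)) (hw : (w i : ℕ) ≤ (w j : ℕ)) :
    lehmer v i ≤ lehmer v j + mext w i j.castSucc := by
  have h := gen_count hsub hij hw (Fin.last n)
  rw [lehmer_eq, lehmer_eq]
  have e1 : (univ.filter (fun k => i < k ∧ v k < v i)).card
      = (univ.filter (fun k => i < k ∧ v k < v i ∧ (k : ℕ) < ((Fin.last n : Fin (n+1)) : ℕ))).card := by
    congr 1
    apply filter_congr
    intro k _
    simp [k.isLt]
  have e2 : (univ.filter (fun k => j < k ∧ v k < v j)).card
      = (univ.filter (fun k => j < k ∧ v k < v j ∧ (k : ℕ) < ((Fin.last n : Fin (n+1)) : ℕ))).card := by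
    congr 1
    apply filter_congr
    intro k _
    simp [k.isLt]
  rw [e1, e2]
  omega

lemma mext_le_add {w : Equiv.Perm (Fin n)} {i j : Fin n}
    (hij : (i : ℕ) ≤ (j : ℕ)) (hw : (w i : ℕ) ≤ (w j : ℕ)) (l : Fin (n + 1)) :
    mext w i l ≤ mext w i j.castSucc + mext w j l := by
  have h := gen_count (subset_refl (Invs w)) hij hw l
  simp only [mext_eq, Fin.coe_castSucc] at h ⊢
  omega

end CodeAux

namespace CodeAux
variable {n : ℕ}

lemma bmin_apply_self (w : Equiv.Perm (Fin n)) (i : Fin n) (t : ℕ) : bmin w i t i = t := by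
  simp [bmin, mext_self]

lemma bmin_mono (w : Equiv.Perm (Fin n)) (i : Fin n) {t t' : ℕ} (h : t ≤ t') :
    bmin w i t ≤ bmin w i t' := by
  intro j
  simp only [bmin]
  split
  · omega
  · exact le_refl 0

lemma bmin_le_bmin {w : Equiv.Perm (Fin n)} {i j : Fin n}
    (hij : (i : ℕ) ≤ (j : ℕ)) (hw : (w i : ℕ) ≤ (w j : ℕ)) (t : ℕ) :
    bmin w j (t - mext w i j.castSucc) ≤ bmin w i t := by
  intro l
  simp only [bmin]
  by_cases h1 : (j : ℕ) ≤ (l : ℕ) ∧ (w j : ℕ) ≤ (w l : ℕ)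
  · rw [if_pos h1, if_pos ⟨le_trans hij h1.1, le_trans hw h1.2⟩]
    have := mext_le_add (w := w) hij hw l.castSucc
    omega
  · rw [if_neg h1]
    exact Nat.zero_le _

lemma lehmer_mono {v w : Equiv.Perm (Fin n)} (hsub : Invs v ⊆ Invs w) (i : Fin n) :
    lehmer v i ≤ lehmer w i :=
  card_le_card (filter_subset_filter _ hsub)

lemma bmin_le_code {v w : Equiv.Perm (Fin n)} (hsub : Invs v ⊆ Invs w) (i : Fin n) :
    bmin w i (lehmer v i) ≤ lehmer v := by
  intro j
  simp only [bmin]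
  split
  · next h =>
    have := lehmer_le_add_mext hsub h.1 h.2
    omega
  · exact Nat.zero_le _

lemma part1 {w : Equiv.Perm (Fin n)} {x y : Fin n → ℕ}
    (hx : x ∈ codeSet w) (hy : y ∈ codeSet w) :
    x ≤ y ↔ {z ∈ Mset w | z ≤ x} ⊆ {z ∈ Mset w | z ≤ y} := by
  constructor
  · intro h z hz
    exact ⟨hz.1, le_trans hz.2 h⟩
  · intro h i
    obtain ⟨v, hv, rfl⟩ := hx
    by_cases h0 : lehmer v i = 0
    · rw [h0]; exact Nat.zero_le _
    have hb : bmin w i (lehmer v i) ∈ Mset w :=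
      ⟨i, lehmer v i, Nat.one_le_iff_ne_zero.2 h0, lehmer_mono hv i, rfl⟩
    have h2 : bmin w i (lehmer v i) ≤ y := (h ⟨hb, bmin_le_code hv i⟩).2
    have h3 := h2 i
    rwa [bmin_apply_self] at h3

end CodeAux

namespace CodeAux
variable {n : ℕ}

lemma Invs_one : Invs (1 : Equiv.Perm (Fin n)) = ∅ := by
  ext p
  simp only [mem_Invs, Finset.notMem_empty, iff_false, Equiv.Perm.one_apply]
  rintro ⟨h1, h2⟩
  exact absurd (lt_trans h1 h2) (lt_irrefl _)

lemma lehmer_one (i : Fin n) : lehmer (1 : Equiv.Perm (Fin n)) i = 0 := by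
  simp [lehmer, Invs_one]

lemma lehmer_bound (w : Equiv.Perm (Fin n)) (i : Fin n) : lehmer w i + (i : ℕ) + 1 ≤ n := by
  have h1 : lehmer w i ≤ (Finset.Ioi i).card := by
    rw [lehmer_eq]
    apply card_le_card
    intro k hk
    simp only [mem_filter, mem_univ, true_and] at hk
    simpa [Finset.mem_Ioi] using hk.1
  rw [Fin.card_Ioi] at h1
  have := i.isLt
  omega

lemma no_inv_of_lehmer_zero {v : Equiv.Perm (Fin n)} {k : Fin n} (h : lehmer v k = 0) :
    ∀ l : Fin n, k < l → v k < v l := by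
  intro l hl
  rw [lehmer_eq, Finset.card_eq_zero, Finset.filter_eq_empty_iff] at h
  have := h (mem_univ l)
  rw [not_and] at this
  have h2 := this hl
  rcases lt_trichotomy (v k) (v l) with h | h | h
  · exact h
  · exact absurd (v.injective h) (ne_of_lt hl)
  · exact absurd h h2

lemma prefix_fixed {v : Equiv.Perm (Fin n)} {i : ℕ}
    (h : ∀ k : Fin n, (k : ℕ) < i → lehmer v k = 0) :
    ∀ m : ℕ, ∀ k : Fin n, (k : ℕ) = m → (k : ℕ) < i → (v k : ℕ) = (k : ℕ) := by
  intro m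
  induction m using Nat.strong_induction_on with
  | _ m IH =>
    rintro k rfl hk
    -- first: (v k : ℕ) ≥ k
    have hge : (k : ℕ) ≤ (v k : ℕ) := by
      by_contra hlt
      push_neg at hlt
      have h1 : ((v k : Fin n) : ℕ) < (k : ℕ) := hlt
      have h2 := IH (v k : ℕ) h1 (v k) rfl (lt_trans h1 hk)
      -- v (v k) = v k as values, so v k = k
      have h3 : v (v k) = v k := Fin.ext h2
      have h4 := v.injective h3
      rw [h4] at hlt
      exact absurd hlt (lt_irrefl _)
    rcases eq_or_lt_of_le hge with heq | hlt
    · exact heq.symm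
    · exfalso
      set pos := v.symm k with hpos
      have hvpos : v pos = k := v.apply_symm_apply k
      have hpk : pos ≠ k := by
        intro hc
        rw [hc] at hvpos
        rw [hvpos] at hlt
        exact absurd hlt (lt_irrefl _)
      rcases lt_or_gt_of_ne (fun hc : (pos : ℕ) = (k : ℕ) => hpk (Fin.ext hc)) with hc | hc
      · have := IH (pos : ℕ) hc pos rfl (lt_trans hc hk)
        rw [hvpos] at this
        omega
      · -- inversion (k, pos)
        have hinv := no_inv_of_lehmer_zero (h k hk) pos (by rwa [Fin.lt_def])
        rw [hvpos] at hinv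
        rw [Fin.lt_def] at hinv
        omega

lemma val_le_add_lehmer (v : Equiv.Perm (Fin n)) (i : Fin n) :
    (v i : ℕ) ≤ (i : ℕ) + lehmer v i := by
  have hcard : (univ.filter (fun k : Fin n => v k < v i)).card = (v i : ℕ) := by
    have himg : (univ.filter (fun k : Fin n => v k < v i)).card
        = (Finset.Iio (v i)).card := by
      apply Finset.card_bij (fun k _ => v k)
      · intro k hk
        simp only [mem_filter, mem_univ, true_and] at hk
        simpa [Finset.mem_Iio] using hk
      · intro a ha b hb hab
        exact v.injective hab
      · intro m hm
        refine ⟨v.symm m, ?_, v.apply_symm_apply m⟩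
        simp only [mem_filter, mem_univ, true_and, Equiv.apply_symm_apply]
        simpa [Finset.mem_Iio] using hm
    rw [himg, Fin.card_Iio]
  have hsplit := Finset.card_filter_add_card_filter_not
    (s := univ.filter (fun k : Fin n => v k < v i)) (p := fun k : Fin n => k < i)
  have c1 : ((univ.filter (fun k : Fin n => v k < v i)).filter (fun k : Fin n => k < i)).card
      ≤ (i : ℕ) := by
    calc _ ≤ (Finset.Iio i).card := by
            apply card_le_card
            intro k hk
            simp only [mem_filter] at hk
            simpa [Finset.mem_Iio] using hk.2
      _ = (i : ℕ) := Fin.card_Iio i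
  have c2 : ((univ.filter (fun k : Fin n => v k < v i)).filter (fun k : Fin n => ¬ k < i)).card
      ≤ lehmer v i := by
    rw [lehmer_eq]
    apply card_le_card
    intro k hk
    simp only [mem_filter, mem_univ, true_and, not_lt] at hk ⊢
    obtain ⟨hvk, hik⟩ := hk
    have : k ≠ i := fun hc => by rw [hc] at hvk; exact absurd hvk (lt_irrefl _)
    exact ⟨lt_of_le_of_ne hik (Ne.symm this), hvk⟩
  omega

end CodeAux

namespace CodeAux
variable {n : ℕ}

lemma swap_cmp {b c x y : Fin n} (hc : (c : ℕ) = (b : ℕ) + 1)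
    (h1 : ¬(x = b ∧ y = c)) (h2 : ¬(x = c ∧ y = b)) :
    (Equiv.swap b c x < Equiv.swap b c y ↔ x < y) := by
  have hvals : ∀ z w : Fin n, z = w ↔ (z : ℕ) = (w : ℕ) := fun z w => Fin.ext_iff
  simp only [Equiv.swap_apply_def]
  split_ifs with e1 e2 e3 e4 e5 e6 e7 e8 <;>
    simp only [Fin.lt_def] <;>
    first
      | (exfalso; simp only [hvals] at *; omega)
      | (simp only [hvals] at *; omega)

lemma lehmer_swap {v : Equiv.Perm (Fin n)} {p q : Fin n} (hpq : p < q)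
    (hv : (v q : ℕ) = (v p : ℕ) + 1) (k : Fin n) :
    lehmer (Equiv.swap (v p) (v q) * v) k = lehmer v k + if k = p then 1 else 0 := by
  have hsp : Equiv.swap (v p) (v q) (v p) = v q := Equiv.swap_apply_left _ _
  have hsq : Equiv.swap (v p) (v q) (v q) = v p := Equiv.swap_apply_right _ _
  rw [lehmer_eq, lehmer_eq]
  by_cases hk : k = p
  · subst hk
    rw [if_pos rfl]
    have hqnot : q ∉ univ.filter (fun l => k < l ∧ v l < v k) := by
      simp only [mem_filter, mem_univ, true_and, not_and]
      intro
      rw [Fin.lt_def]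
      omega
    have hset : (univ.filter (fun l => k < l ∧
          (Equiv.swap (v k) (v q) * v) l < (Equiv.swap (v k) (v q) * v) k))
        = insert q (univ.filter (fun l => k < l ∧ v l < v k)) := by
      ext l
      simp only [mem_filter, mem_univ, true_and, Finset.mem_insert]
      simp only [Equiv.Perm.mul_apply]
      by_cases hlq : l = q
      · subst hlq
        refine iff_of_true ⟨hpq, ?_⟩ (Or.inl rfl)
        rw [hsq, hsp, Fin.lt_def]
        omega
      · simp only [hlq, false_or]
        refine and_congr_right (fun _ => ?_)
        refine swap_cmp hv ?_ ?_
        · rintro ⟨-, hc⟩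
          rw [hc] at hv
          omega
        · rintro ⟨hc, -⟩
          exact hlq (v.injective hc)
    rw [hset, Finset.card_insert_of_notMem hqnot]
  · rw [if_neg hk, add_zero]
    congr 1
    ext l
    simp only [mem_filter, mem_univ, true_and]
    simp only [Equiv.Perm.mul_apply]
    by_cases hkl : k < l
    · refine and_congr_right (fun _ => ?_)
      refine swap_cmp hv ?_ ?_
      · rintro ⟨hc1, hc2⟩
        have : l = p := v.injective hc1
        have : k = q := v.injective hc2
        subst this
        subst ‹l = p›
        exact absurd (lt_trans hpq hkl) (lt_irrefl _)
      · rintro ⟨-, hc⟩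
        exact hk (v.injective hc)
    · simp [hkl]

end CodeAux

namespace CodeAux
variable {n : ℕ}

lemma exists_perm_of_code :
    ∀ N : ℕ, ∀ x : Fin n → ℕ, (∑ i, x i) = N → (∀ i : Fin n, x i + (i : ℕ) + 1 ≤ n) →
      ∃ v : Equiv.Perm (Fin n), ∀ k, lehmer v k = x k := by
  intro N
  induction N using Nat.strong_induction_on with
  | _ N IH =>
    intro x hsum hbd
    by_cases h0 : ∀ i, x i = 0
    · exact ⟨1, fun k => by rw [lehmer_one, h0 k]⟩
    · push_neg at h0
      have hT : (univ.filter (fun i : Fin n => x i ≠ 0)).Nonempty := by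
        obtain ⟨i, hi⟩ := h0
        exact ⟨i, by simp [hi]⟩
      set i := (univ.filter (fun i : Fin n => x i ≠ 0)).min' hT with hidef
      have hi : x i ≠ 0 := by
        have := Finset.min'_mem _ hT
        rw [← hidef] at this
        exact (mem_filter.1 this).2
      have hmin : ∀ k : Fin n, (k : ℕ) < (i : ℕ) → x k = 0 := by
        intro k hk
        by_contra hc
        have hkT : k ∈ univ.filter (fun i : Fin n => x i ≠ 0) := by simp [hc]
        have := Finset.min'_le _ _ hkT
        rw [← hidef] at this
        rw [Fin.le_def] at this
        omega
      set x' := Function.update x i (x i - 1) with hx'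
      have hx'i : x' i = x i - 1 := Function.update_self i _ x
      have hx'ne : ∀ k, k ≠ i → x' k = x k := fun k hk => Function.update_of_ne hk _ x
      have hsum' : ∑ j, x' j = N - 1 := by
        have h1 : ∑ j, x' j = (x i - 1) + ∑ j ∈ univ \ {i}, x j :=
          Finset.sum_update_of_mem (mem_univ i) x (x i - 1)
        have h2 : x i + ∑ j ∈ univ.erase i, x j = ∑ j, x j :=
          Finset.add_sum_erase univ x (mem_univ i)
        rw [Finset.sdiff_singleton_eq_erase] at h1
        omega
      have hbd' : ∀ k : Fin n, x' k + (k : ℕ) + 1 ≤ n := by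
        intro k
        by_cases hk : k = i
        · rw [hk, hx'i]
          have := hbd i
          omega
        · rw [hx'ne k hk]
          exact hbd k
      have hNpos : 1 ≤ N := by
        have h2 : x i + ∑ j ∈ univ.erase i, x j = ∑ j, x j :=
          Finset.add_sum_erase univ x (mem_univ i)
        omega
      obtain ⟨v', hv'⟩ := IH (N - 1) (by omega) x' hsum' hbd'
      -- prefix of v' is the identity
      have hpre : ∀ k : Fin n, (k : ℕ) < (i : ℕ) → (v' k : ℕ) = (k : ℕ) := by
        intro k hk
        refine prefix_fixed (fun k hk => ?_) (k : ℕ) k rfl hk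
        rw [hv' k]
        by_cases hki : k = i
        · subst hki; omega
        · rw [hx'ne k hki]; exact hmin k hk
      have hxi1 : 1 ≤ x i := Nat.one_le_iff_ne_zero.2 hi
      -- v' i has value ≥ i
      have hge : (i : ℕ) ≤ (v' i : ℕ) := by
        by_contra hlt
        push_neg at hlt
        have h1 := hpre (v' i) hlt
        have h2 : v' (v' i) = v' i := Fin.ext h1
        have h3 := v'.injective h2
        rw [h3] at hlt
        exact absurd hlt (lt_irrefl _)
      -- v' i + 1 < n
      have hlt : (v' i : ℕ) + 1 < n := by
        have h1 := val_le_add_lehmer v' i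
        have h2 : lehmer v' i = x i - 1 := by rw [hv' i, hx'i]
        have h3 := hbd i
        omega
      set q := v'.symm ⟨(v' i : ℕ) + 1, by omega⟩ with hqdef
      have hq : (v' q : ℕ) = (v' i : ℕ) + 1 := by
        rw [hqdef, Equiv.apply_symm_apply]
      have hiq : i < q := by
        have hne : q ≠ i := by
          intro hc
          rw [hc] at hq
          omega
        rcases Nat.lt_or_ge (q : ℕ) (i : ℕ) with hc | hc
        · have := hpre q hc
          omega
        · rw [Fin.lt_def]
          rcases Nat.eq_or_lt_of_le hc with hc2 | hc2
          · exact absurd (Fin.ext hc2.symm) hne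
          · exact hc2
      refine ⟨Equiv.swap (v' i) (v' q) * v', fun k => ?_⟩
      rw [lehmer_swap hiq hq k, hv' k]
      by_cases hk : k = i
      · subst hk
        rw [if_pos rfl, hx'i]
        omega
      · rw [if_neg hk, hx'ne k hk, add_zero]

end CodeAux

namespace CodeAux
variable {n : ℕ}

lemma invs_subset_of_code {v w : Equiv.Perm (Fin n)}
    (hC : ∀ i j : Fin n, (i : ℕ) ≤ (j : ℕ) → (w i : ℕ) ≤ (w j : ℕ) →
      lehmer v i ≤ lehmer v j + mext w i j.castSucc) :
    Invs v ⊆ Invs w := by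
  by_contra hcon
  have hne : (Invs v \ Invs w).Nonempty := by
    rw [Finset.sdiff_nonempty]
    exact fun h => hcon h
  obtain ⟨p, hp, hmax⟩ := Finset.exists_max_image (Invs v \ Invs w) (fun p => ((p.1 : ℕ))) hne
  obtain ⟨i, j⟩ := p
  rw [Finset.mem_sdiff] at hp
  obtain ⟨hpv, hpw⟩ := hp
  rw [mem_Invs] at hpv hpw
  dsimp only at hpv hpw hmax
  obtain ⟨hij, hvji⟩ := hpv
  have hwij : (w i : ℕ) < (w j : ℕ) := by
    rw [not_and] at hpw
    have h1 := hpw hij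
    rw [Fin.lt_def] at h1
    have h2 : w i ≠ w j := fun hc => (ne_of_lt hij) (w.injective hc)
    rw [Ne, Fin.ext_iff] at h2
    omega
  -- counting sets
  set A := univ.filter (fun k => i < k ∧ v k < v i) with hA
  set Mm := univ.filter (fun k => i < k ∧ w k < w i ∧ (k : ℕ) < (j : ℕ)) with hMm
  set B := univ.filter (fun k => j < k ∧ v k < v j) with hB
  have hjA : j ∈ A := by simp [hA, hij, hvji]
  have hMmA : Mm ⊆ A := by
    intro k hk
    simp only [hMm, mem_filter, mem_univ, true_and] at hk
    obtain ⟨hik, hwk, hkj⟩ := hk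
    simp only [hA, mem_filter, mem_univ, true_and]
    refine ⟨hik, ?_⟩
    by_contra hc
    have hne2 : v k ≠ v i := fun hc2 => (ne_of_lt hik) (v.injective hc2).symm
    have hvik : v i < v k := lt_of_le_of_ne (not_lt.1 hc) (Ne.symm hne2)
    have hkjv : (k, j) ∈ Invs v := by
      rw [mem_Invs]
      exact ⟨by rwa [Fin.lt_def], lt_trans hvji hvik⟩
    have hkjw : (k, j) ∉ Invs w := by
      rw [mem_Invs, not_and]
      dsimp only
      intro
      rw [Fin.lt_def] at hwk ⊢
      omega
    have h9 := hmax (k, j) (Finset.mem_sdiff.2 ⟨hkjv, hkjw⟩)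
    dsimp only at h9
    rw [Fin.lt_def] at hik
    omega
  have hBA : B ⊆ A := by
    intro k hk
    simp only [hB, mem_filter, mem_univ, true_and] at hk
    simp only [hA, mem_filter, mem_univ, true_and]
    exact ⟨lt_trans hij hk.1, lt_trans hk.2 hvji⟩
  have hdisj : Disjoint Mm B := by
    rw [Finset.disjoint_left]
    intro k h1 h2
    simp only [hMm, mem_filter, mem_univ, true_and] at h1
    simp only [hB, mem_filter, mem_univ, true_and] at h2
    have := h2.1
    rw [Fin.lt_def] at this
    omega
  have hjMmB : j ∉ Mm ∪ B := by
    simp only [Finset.mem_union, hMm, hB, mem_filter, mem_univ, true_and]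
    rintro (⟨-, -, hc⟩ | ⟨hc, -⟩)
    · omega
    · exact absurd hc (lt_irrefl _)
  have hsub2 : insert j (Mm ∪ B) ⊆ A := by
    intro k hk
    rcases Finset.mem_insert.1 hk with rfl | hk
    · exact hjA
    · rcases Finset.mem_union.1 hk with hk | hk
      · exact hMmA hk
      · exact hBA hk
  have hcard : 1 + Mm.card + B.card ≤ A.card := by
    have h1 := card_le_card hsub2
    rw [Finset.card_insert_of_notMem hjMmB, Finset.card_union_of_disjoint hdisj] at h1
    omega
  have hAc : A.card = lehmer v i := (lehmer_eq v i).symm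
  have hBc : B.card = lehmer v j := (lehmer_eq v j).symm
  have hMc : Mm.card = mext w i j.castSucc := by
    rw [mext_eq]
    simp only [Fin.coe_castSucc]
    rfl
  have := hC i j (le_of_lt (by rwa [Fin.lt_def] at hij)) (le_of_lt hwij)
  omega

lemma mem_codeSet_of_C {w : Equiv.Perm (Fin n)} {x : Fin n → ℕ}
    (h1 : ∀ i, x i ≤ lehmer w i)
    (h2 : ∀ i j : Fin n, (i : ℕ) ≤ (j : ℕ) → (w i : ℕ) ≤ (w j : ℕ) →
      x i ≤ x j + mext w i j.castSucc) :
    x ∈ codeSet w := by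
  have hbd : ∀ i : Fin n, x i + (i : ℕ) + 1 ≤ n := by
    intro i
    have ha := h1 i
    have hb := lehmer_bound w i
    omega
  obtain ⟨v, hv⟩ := exists_perm_of_code (∑ i, x i) x rfl hbd
  refine ⟨v, invs_subset_of_code (fun i j hij hwij => ?_), funext hv⟩
  rw [hv i, hv j]
  exact h2 i j hij hwij

end CodeAux

/-- Theorem 4.13(b): the map `x ↦ {z ∈ M_w : z ≤ x}` is an order isomorphism from
`(c(Λ_w), product order)` onto the poset `(J(M_w), ⊆)` of down-closed subsets (order
ideals) of the subposet `M_w` of `ℕ^n`: it is order-reflecting/preserving and a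
bijection onto the set of order ideals of `M_w`. -/
theorem codeSet_orderIso_ideals {n : ℕ} (w : Equiv.Perm (Fin n)) :
    (∀ x ∈ codeSet w, ∀ y ∈ codeSet w,
      (x ≤ y ↔ {z ∈ Mset w | z ≤ x} ⊆ {z ∈ Mset w | z ≤ y})) ∧
    (∀ S : Set (Fin n → ℕ), S ⊆ Mset w →
      (∀ a ∈ Mset w, ∀ b ∈ S, a ≤ b → a ∈ S) →
      ∃! x : Fin n → ℕ, x ∈ codeSet w ∧ {z ∈ Mset w | z ≤ x} = S) := by
  classical
  constructor
  · intro x hx y hy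
    exact CodeAux.part1 hx hy
  · intro S hS hIdeal
    set F : Fin n → Finset ℕ :=
      fun i => (Finset.Icc 1 (lehmer w i)).filter (fun t => bmin w i t ∈ S) with hF
    set x : Fin n → ℕ := fun i => (F i).sup id with hxdef
    have hFmem : ∀ (i : Fin n) (t : ℕ),
        t ∈ F i ↔ (1 ≤ t ∧ t ≤ lehmer w i ∧ bmin w i t ∈ S) := by
      intro i t
      simp [hF, Finset.mem_Icc, and_assoc]
    have hle_x : ∀ (i : Fin n) (t : ℕ), t ∈ F i → t ≤ x i :=
      fun i t ht => Finset.le_sup (f := id) ht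
    have hxmem : ∀ i : Fin n, x i ≠ 0 → x i ∈ F i := by
      intro i h0
      rcases Finset.eq_empty_or_nonempty (F i) with he | hne
      · exact absurd (by rw [hxdef]; simp [he]) h0
      · obtain ⟨b, hb, hbe⟩ := Finset.exists_mem_eq_sup (F i) hne id
        have : x i = b := by rw [hxdef]; exact hbe
        rw [this]
        exact hb
    have hxle : ∀ i, x i ≤ lehmer w i := by
      intro i
      by_cases h0 : x i = 0
      · rw [h0]; exact Nat.zero_le _
      · exact ((hFmem i (x i)).1 (hxmem i h0)).2.1
    have hdown : ∀ (i : Fin n) (t : ℕ), 1 ≤ t → t ≤ x i → bmin w i t ∈ S := by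
      intro i t h1 h2
      have h0 : x i ≠ 0 := by omega
      have hxi := (hFmem i (x i)).1 (hxmem i h0)
      exact hIdeal _ ⟨i, t, h1, le_trans h2 (hxle i), rfl⟩ _ hxi.2.2
        (CodeAux.bmin_mono w i h2)
    have hC2 : ∀ i j : Fin n, (i : ℕ) ≤ (j : ℕ) → (w i : ℕ) ≤ (w j : ℕ) →
        x i ≤ x j + mext w i j.castSucc := by
      intro i j hij hwij
      by_cases hc : x i ≤ mext w i j.castSucc
      · omega
      · push_neg at hc
        have hs1 : 1 ≤ x i - mext w i j.castSucc := by omega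
        have hsl : x i - mext w i j.castSucc ≤ lehmer w j := by
          have h1 := hxle i
          have h2 := CodeAux.mext_le_add hij hwij (Fin.last n)
          rw [CodeAux.mext_last, CodeAux.mext_last] at h2
          omega
        have hb0 : bmin w i (x i) ∈ S := hdown i (x i) (by omega) le_rfl
        have hbs : bmin w j (x i - mext w i j.castSucc) ∈ S :=
          hIdeal _ ⟨j, _, hs1, hsl, rfl⟩ _ hb0 (CodeAux.bmin_le_bmin hij hwij (x i))
        have := hle_x j _ ((hFmem j _).2 ⟨hs1, hsl, hbs⟩)
        omega
    have hxcode : x ∈ codeSet w := CodeAux.mem_codeSet_of_C hxle hC2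
    have hset : {z ∈ Mset w | z ≤ x} = S := by
      apply Set.ext
      intro z
      constructor
      · rintro ⟨⟨i, t, ht1, ht2, rfl⟩, hzx⟩
        have h3 := hzx i
        rw [CodeAux.bmin_apply_self] at h3
        exact hdown i t ht1 h3
      · intro hzS
        obtain ⟨i, t, ht1, ht2, hz⟩ := hS hzS
        refine ⟨hS hzS, ?_⟩
        intro l
        rw [hz]
        simp only [bmin]
        split
        · next hcond =>
          obtain ⟨hil, hwil⟩ := hcond
          by_cases hc : t ≤ mext w i l.castSucc
          · omega
          · push_neg at hc
            have hs1 : 1 ≤ t - mext w i l.castSucc := by omega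
            have hsl : t - mext w i l.castSucc ≤ lehmer w l := by
              have h2 := CodeAux.mext_le_add hil hwil (Fin.last n)
              rw [CodeAux.mext_last, CodeAux.mext_last] at h2
              omega
            have hbs : bmin w l (t - mext w i l.castSucc) ∈ S := by
              refine hIdeal _ ⟨l, _, hs1, hsl, rfl⟩ _ hzS ?_
              rw [hz]
              exact CodeAux.bmin_le_bmin hil hwil t
            have := hle_x l _ ((hFmem l _).2 ⟨hs1, hsl, hbs⟩)
            omega
        · exact Nat.zero_le _
    refine ⟨x, ⟨hxcode, hset⟩, ?_⟩
    rintro y ⟨hycode, hyset⟩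
    have h1 : y ≤ x := (CodeAux.part1 hycode hxcode).2 (by rw [hyset, hset])
    have h2 : x ≤ y := (CodeAux.part1 hxcode hycode).2 (by rw [hyset, hset])
    exact le_antisymm h1 h2
end

section
/- Let w ∈ S_n and consider w × w⁻¹ ∈ S_{2n}. Then the weak order interval Λ_{w × w⁻¹} is rank-symmetric: for every k, |{u ∈ S_{2n} : u ≤_L w × w⁻¹, ℓ(u) = k}| = |{u ∈ S_{2n} : u ≤_L w × w⁻¹, ℓ(u) = ℓ(w × w⁻¹) − k}| (note ℓ(w × w⁻¹) = 2ℓ(w)). -/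
lemma mem_Invs {n : ℕ} {w : Equiv.Perm (Fin n)} {p : Fin n × Fin n} :
    p ∈ Invs w ↔ p.1 < p.2 ∧ w p.2 < w p.1 := by
  simp [Invs]

lemma Invs_mul_inv_eq {n : ℕ} {a v : Equiv.Perm (Fin n)} (h : Invs a ⊆ Invs v) :
    Invs (a * v⁻¹) = (Invs v \ Invs a).image (fun p => (v p.2, v p.1)) := by
  ext ⟨x, y⟩
  simp only [mem_Invs, Finset.mem_image, Finset.mem_sdiff, Equiv.Perm.mul_apply, Prod.mk.injEq,
    Prod.exists]
  constructor
  · rintro ⟨hxy, hval⟩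
    refine ⟨v⁻¹ y, v⁻¹ x, ⟨⟨?_, by simpa using hxy⟩, ?_⟩, by simp, by simp⟩
    · by_contra hq
      rcases lt_or_eq_of_le (not_lt.mp hq) with hlt | heq
      · have h2 := h (mem_Invs.mpr (⟨hlt, hval⟩ : (v⁻¹ x, v⁻¹ y).1 < (v⁻¹ x, v⁻¹ y).2 ∧ _))
        rw [mem_Invs] at h2
        simp only [Equiv.Perm.inv_def, Equiv.apply_symm_apply] at h2
        exact absurd h2.2 (not_lt.mpr hxy.le)
      · exact absurd (congrArg v heq) (by simpa using hxy.ne)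
    · rintro ⟨-, h2⟩
      exact absurd hval (not_lt.mpr h2.le)
  · rintro ⟨p, q, ⟨hv, hna⟩, rfl, rfl⟩
    refine ⟨hv.2, ?_⟩
    simp only [Equiv.Perm.inv_def, Equiv.symm_apply_apply]
    rcases lt_trichotomy (a q) (a p) with hlt | heq | hgt
    · exact absurd ⟨hv.1, hlt⟩ hna
    · exact absurd (a.injective heq) hv.1.ne'
    · exact hgt




lemma len_mul_inv_add {n : ℕ} {a v : Equiv.Perm (Fin n)} (h : Invs a ⊆ Invs v) :
    len (a * v⁻¹) + len a = len v := by
  have hinj : Function.Injective (fun p : Fin n × Fin n => (v p.2, v p.1)) := by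
    intro p q hpq
    simp only [Prod.mk.injEq] at hpq
    exact Prod.ext (v.injective hpq.2) (v.injective hpq.1)
  have : len (a * v⁻¹) = (Invs v \ Invs a).card := by
    rw [len, Invs_mul_inv_eq h, Finset.card_image_of_injective _ hinj]
  rw [this, Finset.card_sdiff_of_subset h]
  have := Finset.card_le_card h
  unfold len
  omega

lemma Invs_mul_inv_subset {n : ℕ} {a v : Equiv.Perm (Fin n)} (h : Invs a ⊆ Invs v) :
    Invs (a * v⁻¹) ⊆ Invs v⁻¹ := by
  rw [Invs_mul_inv_eq h]
  rintro ⟨x, y⟩ hx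
  simp only [Finset.mem_image, Finset.mem_sdiff, mem_Invs, Prod.mk.injEq, Prod.exists] at hx
  obtain ⟨p, q, ⟨⟨hpq, hvqp⟩, -⟩, rfl, rfl⟩ := hx
  rw [mem_Invs]
  simpa using ⟨hvqp, hpq⟩

lemma Invs_one' {n : ℕ} : Invs (1 : Equiv.Perm (Fin n)) = ∅ := by
  ext ⟨i, j⟩
  simp only [mem_Invs, Finset.notMem_empty, iff_false, not_and, Equiv.Perm.one_apply]
  exact fun h => (lt_asymm h)

lemma len_inv {n : ℕ} (v : Equiv.Perm (Fin n)) : len v⁻¹ = len v := by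
  have h : Invs (1 : Equiv.Perm (Fin n)) ⊆ Invs v := by rw [Invs_one']; exact Finset.empty_subset _
  have := len_mul_inv_add h
  simpa [len, Invs_one'] using this



lemma dsum_castAdd {m n : ℕ} (a : Equiv.Perm (Fin m)) (b : Equiv.Perm (Fin n)) (i : Fin m) :
    dsum a b (Fin.castAdd n i) = Fin.castAdd n (a i) := by
  simp [dsum, Equiv.permCongr_apply]

lemma dsum_natAdd {m n : ℕ} (a : Equiv.Perm (Fin m)) (b : Equiv.Perm (Fin n)) (j : Fin n) :
    dsum a b (Fin.natAdd m j) = Fin.natAdd m (b j) := by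
  simp [dsum, Equiv.permCongr_apply]

lemma dsum_mul {m n : ℕ} (a v : Equiv.Perm (Fin m)) (b w : Equiv.Perm (Fin n)) :
    dsum a b * dsum v w = dsum (a * v) (b * w) := by
  ext x
  induction x using Fin.addCases with
  | left i => simp [Equiv.Perm.mul_apply, dsum_castAdd]
  | right j => simp [Equiv.Perm.mul_apply, dsum_natAdd]

lemma dsum_one {m n : ℕ} : dsum (1 : Equiv.Perm (Fin m)) (1 : Equiv.Perm (Fin n)) = 1 := by
  ext x
  induction x using Fin.addCases with
  | left i => simp [dsum_castAdd]
  | right j => simp [dsum_natAdd]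

lemma dsum_inv {m n : ℕ} (a : Equiv.Perm (Fin m)) (b : Equiv.Perm (Fin n)) :
    (dsum a b)⁻¹ = dsum a⁻¹ b⁻¹ := by
  apply inv_eq_of_mul_eq_one_right
  rw [dsum_mul]
  simp [dsum_one]

lemma castAdd_lt_iff {m n : ℕ} {i j : Fin m} :
    Fin.castAdd n i < Fin.castAdd n j ↔ i < j := Iff.rfl

lemma natAdd_lt_iff {m n : ℕ} {i j : Fin n} :
    Fin.natAdd m i < Fin.natAdd m j ↔ i < j := by
  rw [Fin.lt_def, Fin.lt_def]
  simp only [Fin.coe_natAdd]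
  omega

lemma castAdd_inj {m n : ℕ} {i j : Fin m} :
    Fin.castAdd n i = Fin.castAdd n j ↔ i = j := by
  rw [Fin.ext_iff, Fin.ext_iff]
  simp

lemma natAdd_inj {m n : ℕ} {i j : Fin n} :
    Fin.natAdd m i = Fin.natAdd m j ↔ i = j := by
  rw [Fin.ext_iff, Fin.ext_iff]
  simp

lemma Invs_dsum {m n : ℕ} (a : Equiv.Perm (Fin m)) (b : Equiv.Perm (Fin n)) :
    Invs (dsum a b) =
      (Invs a).image (fun p => (Fin.castAdd n p.1, Fin.castAdd n p.2)) ∪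
      (Invs b).image (fun p => (Fin.natAdd m p.1, Fin.natAdd m p.2)) := by
  ext ⟨x, y⟩
  simp only [mem_Invs, Finset.mem_union, Finset.mem_image, Prod.mk.injEq, Prod.exists]
  induction x using Fin.addCases with
  | left i =>
    induction y using Fin.addCases with
    | left j =>
      simp only [dsum_castAdd, castAdd_lt_iff, castAdd_inj]
      constructor
      · rintro ⟨hlt, hv⟩
        exact Or.inl ⟨i, j, ⟨hlt, hv⟩, rfl, rfl⟩
      · rintro (⟨p, q, hpq, rfl, rfl⟩ | ⟨p, q, hpq, h1, h2⟩)
        · exact hpq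
        · exact absurd h1 (by rw [Fin.ext_iff]; simp; omega)
    | right j =>
      simp only [dsum_castAdd, dsum_natAdd]
      constructor
      · rintro ⟨-, hv⟩
        exfalso
        rw [Fin.lt_def] at hv
        simp only [Fin.coe_castAdd, Fin.coe_natAdd] at hv
        omega
      · rintro (⟨p, q, hpq, h1, h2⟩ | ⟨p, q, hpq, h1, h2⟩)
        · exact absurd h2 (by rw [Fin.ext_iff]; simp; omega)
        · exact absurd h1 (by rw [Fin.ext_iff]; simp; omega)
  | right i =>
    induction y using Fin.addCases with
    | left j =>
      constructor
      · rintro ⟨hlt, -⟩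
        exfalso
        rw [Fin.lt_def] at hlt
        simp only [Fin.coe_castAdd, Fin.coe_natAdd] at hlt
        omega
      · rintro (⟨p, q, hpq, h1, h2⟩ | ⟨p, q, hpq, h1, h2⟩)
        · exact absurd h1 (by rw [Fin.ext_iff]; simp; omega)
        · exact absurd h2 (by rw [Fin.ext_iff]; simp; omega)
    | right j =>
      simp only [dsum_natAdd, natAdd_lt_iff, natAdd_inj]
      constructor
      · rintro ⟨hlt, hv⟩
        exact Or.inr ⟨i, j, ⟨hlt, hv⟩, rfl, rfl⟩
      · rintro (⟨p, q, hpq, h1, h2⟩ | ⟨p, q, hpq, rfl, rfl⟩)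
        · exact absurd h1 (by rw [Fin.ext_iff]; simp; omega)
        · exact hpq

lemma castPair_inj {m n : ℕ} : Function.Injective
    (fun p : Fin m × Fin m => (Fin.castAdd n p.1, Fin.castAdd n p.2)) := by
  rintro ⟨p1, p2⟩ ⟨q1, q2⟩ h
  simp only [Prod.mk.injEq, castAdd_inj] at h
  exact Prod.ext h.1 h.2

lemma natPair_inj {m n : ℕ} : Function.Injective
    (fun p : Fin n × Fin n => (Fin.natAdd m p.1, Fin.natAdd m p.2)) := by
  rintro ⟨p1, p2⟩ ⟨q1, q2⟩ h
  simp only [Prod.mk.injEq, natAdd_inj] at h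
  exact Prod.ext h.1 h.2

lemma images_disjoint {m n : ℕ} (s : Finset (Fin m × Fin m)) (t : Finset (Fin n × Fin n)) :
    Disjoint (s.image (fun p => (Fin.castAdd n p.1, Fin.castAdd n p.2)))
      (t.image (fun p => (Fin.natAdd m p.1, Fin.natAdd m p.2))) := by
  rw [Finset.disjoint_left]
  rintro ⟨x, y⟩ hx hy
  simp only [Finset.mem_image, Prod.mk.injEq, Prod.exists] at hx hy
  obtain ⟨p, q, -, h1, -⟩ := hx
  obtain ⟨p', q', -, h1', -⟩ := hy
  rw [← h1'] at h1
  rw [Fin.ext_iff] at h1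
  simp at h1
  omega

lemma len_dsum {m n : ℕ} (a : Equiv.Perm (Fin m)) (b : Equiv.Perm (Fin n)) :
    len (dsum a b) = len a + len b := by
  rw [len, Invs_dsum, Finset.card_union_of_disjoint (images_disjoint _ _),
    Finset.card_image_of_injective _ castPair_inj, Finset.card_image_of_injective _ natPair_inj]
  rfl

lemma leftWeak_dsum_iff {m n : ℕ} (a v : Equiv.Perm (Fin m)) (b w : Equiv.Perm (Fin n)) :
    leftWeak (dsum a b) (dsum v w) ↔ leftWeak a v ∧ leftWeak b w := by
  unfold leftWeak
  rw [Invs_dsum, Invs_dsum]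
  constructor
  · intro h
    constructor
    · intro q hq
      have := h (Finset.mem_union_left _ (Finset.mem_image_of_mem _ hq))
      rw [Finset.mem_union] at this
      rcases this with hm | hm
      · rw [Finset.mem_image] at hm
        obtain ⟨q', hq', he⟩ := hm
        rwa [← castPair_inj he]
      · exfalso
        rw [Finset.mem_image] at hm
        obtain ⟨q', -, he⟩ := hm
        have := congrArg (fun p => (p.1 : ℕ)) he
        simp at this
        omega
    · intro q hq
      have := h (Finset.mem_union_right _ (Finset.mem_image_of_mem _ hq))
      rw [Finset.mem_union] at this
      rcases this with hm | hm
      · exfalso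
        rw [Finset.mem_image] at hm
        obtain ⟨q', -, he⟩ := hm
        have := congrArg (fun p => (p.1 : ℕ)) he
        simp at this
        omega
      · rw [Finset.mem_image] at hm
        obtain ⟨q', hq', he⟩ := hm
        rwa [← natPair_inj he]
  · rintro ⟨h1, h2⟩
    exact Finset.union_subset_union (Finset.image_subset_image h1)
      (Finset.image_subset_image h2)

lemma block_lt {n : ℕ} {w : Equiv.Perm (Fin n)} {u : Equiv.Perm (Fin (n + n))}
    (h : leftWeak u (dsum w w⁻¹)) :
    ∀ i : Fin (n + n), (i : ℕ) < n → (u i : ℕ) < n := by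
  intro i hi
  by_contra hui
  push_neg at hui
  -- every u (natAdd n j) is strictly greater than u i
  have key : ∀ j : Fin n, u i < u (Fin.natAdd n j) := by
    intro j
    have hij : i < Fin.natAdd n j := by
      rw [Fin.lt_def]; simp; omega
    have hnot : (i, Fin.natAdd n j) ∉ Invs (dsum w w⁻¹) := by
      rw [mem_Invs]
      rintro ⟨-, hv⟩
      have e : i = Fin.castAdd n ⟨(i : ℕ), hi⟩ := by rw [Fin.ext_iff]; simp
      rw [e, dsum_castAdd, dsum_natAdd, Fin.lt_def] at hv
      simp at hv
      omega
    have hnu : (i, Fin.natAdd n j) ∉ Invs u := fun hm => hnot (h hm)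
    rw [mem_Invs] at hnu
    push_neg at hnu
    have hle := hnu hij
    rcases lt_or_eq_of_le hle with hlt | heq
    · exact hlt
    · exact absurd (u.injective heq) (by rw [Fin.ext_iff]; simp; omega)
  -- counting: n distinct values above u i in Fin (n+n)
  have hcard : (Finset.univ : Finset (Fin n)).card ≤ (Finset.Ioi (u i)).card := by
    apply Finset.card_le_card_of_injOn (fun j => u (Fin.natAdd n j))
    · intro j _
      rw [Finset.mem_coe, Finset.mem_Ioi]
      exact key j
    · intro j _ j' _ he
      have := u.injective he
      rwa [natAdd_inj] at this
  rw [Finset.card_univ, Fintype.card_fin, Fin.card_Ioi] at hcard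
  omega

lemma exists_dsum {n : ℕ} {w : Equiv.Perm (Fin n)} {u : Equiv.Perm (Fin (n + n))}
    (h : leftWeak u (dsum w w⁻¹)) :
    ∃ (a b : Equiv.Perm (Fin n)), u = dsum a b := by
  have hlt := block_lt h
  have hf : Function.Injective (fun i : Fin n =>
      (⟨(u (Fin.castAdd n i) : ℕ), hlt _ (by simp)⟩ : Fin n)) := by
    intro i j he
    rw [Fin.ext_iff] at he
    simp only at he
    have : u (Fin.castAdd n i) = u (Fin.castAdd n j) := by rw [Fin.ext_iff]; exact he
    have := u.injective this
    rwa [castAdd_inj] at this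
  set f : Fin n → Fin n := fun i => ⟨(u (Fin.castAdd n i) : ℕ), hlt _ (by simp)⟩ with hfdef
  have hbij : Function.Bijective f := Finite.injective_iff_bijective.mp hf
  -- second block: values are ≥ n
  have hge : ∀ j : Fin n, n ≤ (u (Fin.natAdd n j) : ℕ) := by
    intro j
    by_contra hc
    push_neg at hc
    obtain ⟨i, hi⟩ := hbij.2 ⟨(u (Fin.natAdd n j) : ℕ), hc⟩
    have : u (Fin.castAdd n i) = u (Fin.natAdd n j) := by
      rw [Fin.ext_iff]
      have := congrArg (fun x : Fin n => (x : ℕ)) hi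
      simpa [hfdef] using this
    have := u.injective this
    rw [Fin.ext_iff] at this
    simp at this
    omega
  have hg : Function.Injective (fun j : Fin n =>
      (⟨(u (Fin.natAdd n j) : ℕ) - n, by have := (u (Fin.natAdd n j)).isLt; have := hge j; omega⟩ : Fin n)) := by
    intro i j he
    rw [Fin.ext_iff] at he
    simp only at he
    have h1 := hge i
    have h2 := hge j
    have : u (Fin.natAdd n i) = u (Fin.natAdd n j) := by rw [Fin.ext_iff]; omega
    have := u.injective this
    rwa [natAdd_inj] at this
  refine ⟨Equiv.ofBijective f hbij, Equiv.ofBijective _ (Finite.injective_iff_bijective.mp hg), ?_⟩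
  ext x
  induction x using Fin.addCases with
  | left i =>
    rw [dsum_castAdd]
    rfl
  | right j =>
    rw [dsum_natAdd]
    have := hge j
    simp only [Fin.coe_natAdd, Equiv.ofBijective_apply]
    omega

def bswap (n : ℕ) : Equiv.Perm (Fin (n + n)) :=
  (finSumFinEquiv.symm.trans (Equiv.sumComm (Fin n) (Fin n))).trans finSumFinEquiv

lemma bswap_castAdd {n : ℕ} (i : Fin n) : bswap n (Fin.castAdd n i) = Fin.natAdd n i := by
  simp only [bswap, Equiv.trans_apply, finSumFinEquiv_symm_apply_castAdd,
    Equiv.sumComm_apply, Sum.swap_inl, finSumFinEquiv_apply_right]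

lemma bswap_natAdd {n : ℕ} (i : Fin n) : bswap n (Fin.natAdd n i) = Fin.castAdd n i := by
  simp only [bswap, Equiv.trans_apply, finSumFinEquiv_symm_apply_natAdd,
    Equiv.sumComm_apply, Sum.swap_inr, finSumFinEquiv_apply_left]

lemma bswap_conj {n : ℕ} (a b : Equiv.Perm (Fin n)) :
    bswap n * dsum a b * bswap n = dsum b a := by
  ext x
  induction x using Fin.addCases with
  | left i =>
    have : (bswap n * dsum a b * bswap n) (Fin.castAdd n i)
        = bswap n (dsum a b (bswap n (Fin.castAdd n i))) := rfl
    rw [this, bswap_castAdd, dsum_natAdd, bswap_natAdd, dsum_castAdd]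
  | right j =>
    have : (bswap n * dsum a b * bswap n) (Fin.natAdd n j)
        = bswap n (dsum a b (bswap n (Fin.natAdd n j))) := rfl
    rw [this, bswap_natAdd, dsum_castAdd, bswap_castAdd, dsum_natAdd]

lemma bswap_sq {n : ℕ} : bswap n * bswap n = 1 := by
  ext x
  induction x using Fin.addCases with
  | left i =>
    have : (bswap n * bswap n) (Fin.castAdd n i) = bswap n (bswap n (Fin.castAdd n i)) := rfl
    rw [this, bswap_castAdd, bswap_natAdd]; rfl
  | right j =>
    have : (bswap n * bswap n) (Fin.natAdd n j) = bswap n (bswap n (Fin.natAdd n j)) := rfl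
    rw [this, bswap_natAdd, bswap_castAdd]; rfl

/-- The length-complementing involution on `Λ_{w × w⁻¹}`. -/
def phi {n : ℕ} (w : Equiv.Perm (Fin n)) (u : Equiv.Perm (Fin (n + n))) :
    Equiv.Perm (Fin (n + n)) :=
  bswap n * u * bswap n * dsum w w⁻¹

lemma phi_dsum {n : ℕ} (w : Equiv.Perm (Fin n)) (a b : Equiv.Perm (Fin n)) :
    phi w (dsum a b) = dsum (b * w) (a * w⁻¹) := by
  rw [phi, bswap_conj, dsum_mul]

lemma phi_injective {n : ℕ} (w : Equiv.Perm (Fin n)) : Function.Injective (phi w) := by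
  intro u v h
  unfold phi at h
  have h1 := mul_right_cancel h
  have h2 := mul_right_cancel h1
  exact mul_left_cancel h2

lemma phi_phi {n : ℕ} (w : Equiv.Perm (Fin n)) (u : Equiv.Perm (Fin (n + n))) :
    phi w (phi w u) = u := by
  unfold phi
  have hsw : bswap n * dsum w w⁻¹ * bswap n = (dsum w w⁻¹)⁻¹ := by
    rw [bswap_conj, dsum_inv, inv_inv]
  calc bswap n * (bswap n * u * bswap n * dsum w w⁻¹) * bswap n * dsum w w⁻¹
      = (bswap n * bswap n) * u * (bswap n * dsum w w⁻¹ * bswap n) * dsum w w⁻¹ := by group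
    _ = u := by rw [bswap_sq, hsw]; group

lemma phi_key {n : ℕ} (w : Equiv.Perm (Fin n)) {u : Equiv.Perm (Fin (n + n))}
    (hu : leftWeak u (dsum w w⁻¹)) :
    leftWeak (phi w u) (dsum w w⁻¹) ∧ len (phi w u) + len u = len (dsum w w⁻¹) := by
  obtain ⟨a, b, rfl⟩ := exists_dsum hu
  rw [leftWeak_dsum_iff] at hu
  obtain ⟨ha, hb⟩ := hu
  have hbw : Invs (b * w) ⊆ Invs w := by
    have := Invs_mul_inv_subset (v := w⁻¹) hb
    rwa [inv_inv] at this
  have haw : Invs (a * w⁻¹) ⊆ Invs w⁻¹ := Invs_mul_inv_subset ha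
  have l1 : len (b * w) + len b = len w⁻¹ := by
    have := len_mul_inv_add (v := w⁻¹) hb
    rwa [inv_inv] at this
  have l2 : len (a * w⁻¹) + len a = len w := len_mul_inv_add ha
  constructor
  · rw [phi_dsum, leftWeak_dsum_iff]
    exact ⟨hbw, haw⟩
  · rw [phi_dsum, len_dsum, len_dsum, len_dsum, len_inv]
    rw [len_inv] at l1
    omega

/-- Proposition 5.2: the interval `Λ_{w × w⁻¹}` in the left weak order of `S_{2n}` is
rank-symmetric (note `ℓ(w × w⁻¹) = 2ℓ(w)`): for every `k`, the number of
`u ≤_L w × w⁻¹` of length `k` equals the number of such `u` of length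
`ℓ(w × w⁻¹) − k`. -/
theorem dsum_inv_rank_symmetric {n : ℕ} (w : Equiv.Perm (Fin n)) :
    len (dsum w w⁻¹) = 2 * len w ∧
    ∀ k : ℕ,
      {u : Equiv.Perm (Fin (n + n)) | leftWeak u (dsum w w⁻¹) ∧ len u = k}.ncard =
      {u : Equiv.Perm (Fin (n + n)) |
        leftWeak u (dsum w w⁻¹) ∧ len u + k = len (dsum w w⁻¹)}.ncard := by
  constructor
  · rw [len_dsum, len_inv]; omega
  · intro k
    have hset : {u : Equiv.Perm (Fin (n + n)) |
        leftWeak u (dsum w w⁻¹) ∧ len u + k = len (dsum w w⁻¹)} =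
        phi w '' {u : Equiv.Perm (Fin (n + n)) | leftWeak u (dsum w w⁻¹) ∧ len u = k} := by
      ext u
      simp only [Set.mem_setOf_eq, Set.mem_image]
      constructor
      · rintro ⟨hu, hk⟩
        obtain ⟨h1, h2⟩ := phi_key w hu
        exact ⟨phi w u, ⟨h1, by omega⟩, phi_phi w u⟩
      · rintro ⟨v, ⟨hv, hk⟩, rfl⟩
        obtain ⟨h1, h2⟩ := phi_key w hv
        exact ⟨h1, by omega⟩
    rw [hset, Set.ncard_image_of_injective _ (phi_injective w)]
end
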